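/- Let (Z, ν) be a measure space with 0 < ν(Z) < ∞, and let (Aₙ)ₙ∈ℕ be a sequence of measurable subsets of Z such that there exists a constant c > 0 with ν(Aₙ ∩ Aₘ) ≤ c·ν(Aₙ)·ν(Aₘ) for all distinct n, m ∈ ℕ. Then ν(limsupₙ Aₙ) > 0 if and only if the series ∑_{n∈ℕ} ν(Aₙ) diverges. -/

import Mathlib

open MeasureTheory Filter Set ENNReal


-- Chung–Erdős inequality
theorem chung_erdos_aux {Z : Type*} [MeasurableSpace Z] (ν : Measure Z)
    (A : ℕ → Set Z) (hA : ∀ n, MeasurableSet (A n)) (F : Finset ℕ) :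
    (∑ k ∈ F, ν (A k)) ^ 2 ≤ ν (⋃ k ∈ F, A k) * ∑ j ∈ F, ∑ k ∈ F, ν (A j ∩ A k) := by
  set f : Z → ℝ≥0∞ := fun x => ∑ k ∈ F, (A k).indicator 1 x with hf
  have hfm : Measurable f := by
    exact Finset.measurable_sum _ fun k _ => (measurable_one.indicator (hA k))
  have hU : MeasurableSet (⋃ k ∈ F, A k) := F.measurableSet_biUnion fun k _ => hA k
  set g : Z → ℝ≥0∞ := (⋃ k ∈ F, A k).indicator 1 with hg
  have hgm : Measurable g := measurable_one.indicator hU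
  have hfg : f = f * g := by
    funext x
    by_cases hx : x ∈ ⋃ k ∈ F, A k
    · simp [hg, Set.indicator_of_mem hx]
    · have : f x = 0 := by
        refine Finset.sum_eq_zero fun k hk => ?_
        have : x ∉ A k := fun h => hx (Set.mem_biUnion hk h)
        simp [Set.indicator_of_notMem this]
      simp [this]
  have hIf : ∫⁻ x, f x ∂ν = ∑ k ∈ F, ν (A k) := by
    rw [hf, lintegral_finset_sum _ fun k _ => measurable_one.indicator (hA k)]
    simp [lintegral_indicator_one (hA _)]
  have hIf2 : ∫⁻ x, f x ^ 2 ∂ν = ∑ j ∈ F, ∑ k ∈ F, ν (A j ∩ A k) := by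
    have : ∀ x, f x ^ 2 = ∑ j ∈ F, ∑ k ∈ F, (A j ∩ A k).indicator (1 : Z → ℝ≥0∞) x := by
      intro x
      rw [sq, hf, Finset.sum_mul_sum]
      simp [Set.inter_indicator_one]
    simp_rw [this]
    rw [lintegral_finset_sum _ fun j _ => Finset.measurable_sum _
      fun k _ => measurable_one.indicator ((hA j).inter (hA k))]
    refine Finset.sum_congr rfl fun j _ => ?_
    rw [lintegral_finset_sum _ fun k _ => measurable_one.indicator ((hA j).inter (hA k))]
    simp [lintegral_indicator_one ((hA _).inter (hA _))]
  have hconj : Real.HolderConjugate 2 2 := Real.holderConjugate_iff.mpr ⟨by norm_num, by norm_num⟩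
  have holder := ENNReal.lintegral_mul_le_Lp_mul_Lq ν hconj hfm.aemeasurable hgm.aemeasurable
  have hg2 : ∫⁻ x, g x ^ (2:ℝ) ∂ν = ν (⋃ k ∈ F, A k) := by
    have : ∀ x, g x ^ (2:ℝ) = g x := by
      intro x
      by_cases hx : x ∈ ⋃ k ∈ F, A k <;>
        simp [hg, Set.indicator_of_mem, Set.indicator_of_notMem, hx,
          ENNReal.rpow_two]
    simp_rw [this]
    rw [hg, lintegral_indicator_one hU]
  have key : ∫⁻ x, f x ∂ν ≤ (∫⁻ x, f x ^ 2 ∂ν) ^ ((1:ℝ)/2) * (ν (⋃ k ∈ F, A k)) ^ ((1:ℝ)/2) := by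
    calc ∫⁻ x, f x ∂ν = ∫⁻ x, (f * g) x ∂ν := by rw [← hfg]
    _ ≤ (∫⁻ x, f x ^ (2:ℝ) ∂ν) ^ ((1:ℝ)/2) * (∫⁻ x, g x ^ (2:ℝ) ∂ν) ^ ((1:ℝ)/2) := holder
    _ = (∫⁻ x, f x ^ 2 ∂ν) ^ ((1:ℝ)/2) * (ν (⋃ k ∈ F, A k)) ^ ((1:ℝ)/2) := by
        rw [hg2]; simp_rw [ENNReal.rpow_two]
  calc (∑ k ∈ F, ν (A k)) ^ 2 = (∫⁻ x, f x ∂ν) ^ 2 := by rw [hIf]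
  _ ≤ ((∫⁻ x, f x ^ 2 ∂ν) ^ ((1:ℝ)/2) * (ν (⋃ k ∈ F, A k)) ^ ((1:ℝ)/2)) ^ 2 := by
      exact pow_le_pow_left' key 2
  _ = (∫⁻ x, f x ^ 2 ∂ν) * ν (⋃ k ∈ F, A k) := by
      rw [mul_pow, ← ENNReal.rpow_natCast (_ ^ ((1:ℝ)/2)) 2, ← ENNReal.rpow_natCast (_ ^ ((1:ℝ)/2)) 2,
        ← ENNReal.rpow_mul, ← ENNReal.rpow_mul]
      norm_num
  _ = ν (⋃ k ∈ F, A k) * ∑ j ∈ F, ∑ k ∈ F, ν (A j ∩ A k) := by rw [hIf2, mul_comm]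

theorem quasi_independent_borel_cantelli {Z : Type*} [MeasurableSpace Z]
    (ν : Measure Z) [IsFiniteMeasure ν] (hν : ν ≠ 0)
    (A : ℕ → Set Z) (hA : ∀ n, MeasurableSet (A n))
    (c : ℝ) (hc : 0 < c)
    (hquasi : ∀ n m : ℕ, n ≠ m → ν (A n ∩ A m) ≤ ENNReal.ofReal c * ν (A n) * ν (A m)) :
    0 < ν (Filter.limsup A Filter.atTop) ↔ (∑' n, ν (A n)) = ⊤ := by
  constructor
  · intro hpos
    by_contra h
    rw [measure_limsup_atTop_eq_zero h] at hpos
    exact lt_irrefl 0 hpos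
  · intro hsum
    set c' : ℝ≥0∞ := ENNReal.ofReal c with hc'def
    have hc'top : c' ≠ ⊤ := ENNReal.ofReal_ne_top
    set B : ℕ → Set Z := fun n => ⋃ k, ⋃ (_ : n ≤ k), A k with hBdef
    have hlimsup : Filter.limsup A Filter.atTop = ⋂ n, B n := by
      rw [Filter.limsup_eq_iInf_iSup_of_nat]
      simp only [hBdef, Set.iInf_eq_iInter, Set.iSup_eq_iUnion]
    have hBm : ∀ n, MeasurableSet (B n) := fun n =>
      MeasurableSet.iUnion fun k => MeasurableSet.iUnion fun _ => hA k
    have hBanti : Antitone B := fun m n hmn =>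
      Set.iUnion₂_subset fun k hk =>
        Set.subset_iUnion₂ (s := fun k (_ : m ≤ k) => A k) k (hmn.trans hk)
    have key : ∀ n, (1 + c')⁻¹ ≤ ν (B n) := by
      intro n
      -- find N with tail sum at least 1
      have ha : (∑ k ∈ Finset.range n, ν (A k)) ≠ ⊤ :=
        (ENNReal.sum_lt_top.mpr fun k _ => measure_lt_top ν _).ne
      have hsup : (⨆ N, ∑ k ∈ Finset.range N, ν (A k)) = ⊤ := by
        rw [← ENNReal.tsum_eq_iSup_nat, hsum]
      have : (∑ k ∈ Finset.range n, ν (A k)) + 1 < ⨆ N, ∑ k ∈ Finset.range N, ν (A k) := by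
        rw [hsup]
        exact lt_top_iff_ne_top.mpr (ENNReal.add_ne_top.mpr ⟨ha, ENNReal.one_ne_top⟩)
      obtain ⟨N, hN⟩ := lt_iSup_iff.mp this
      have hnN : n ≤ N := by
        by_contra hlt
        push_neg at hlt
        have : (∑ k ∈ Finset.range N, ν (A k)) ≤ ∑ k ∈ Finset.range n, ν (A k) :=
          Finset.sum_le_sum_of_subset (Finset.range_subset_range.mpr hlt.le)
        exact absurd (hN.trans_le this) (not_lt.mpr le_self_add)
      set F : Finset ℕ := Finset.Ico n N with hFdef
      set T : ℝ≥0∞ := ∑ k ∈ F, ν (A k) with hTdef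
      have hTtop : T ≠ ⊤ := (ENNReal.sum_lt_top.mpr fun k _ => measure_lt_top ν _).ne
      have hsplit : (∑ k ∈ Finset.range n, ν (A k)) + T = ∑ k ∈ Finset.range N, ν (A k) := by
        rw [hTdef, hFdef, Finset.range_eq_Ico, Finset.range_eq_Ico]
        exact Finset.sum_Ico_consecutive _ (Nat.zero_le n) hnN
      have hT1 : 1 ≤ T := by
        have := hN.le
        rw [← hsplit] at this
        exact (ENNReal.add_le_add_iff_left ha).mp this
      have hT0 : T ≠ 0 := fun h => by simp [h] at hT1
      set U : Set Z := ⋃ k ∈ F, A k with hUdef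
      have hUB : U ⊆ B n := Set.iUnion₂_subset fun k hk =>
        Set.subset_iUnion₂ (s := fun k (_ : n ≤ k) => A k) k (Finset.mem_Ico.mp hk).1
      -- bound the double sum
      have hD : (∑ j ∈ F, ∑ k ∈ F, ν (A j ∩ A k)) ≤ T + c' * T ^ 2 := by
        have step1 : ∀ j ∈ F, (∑ k ∈ F, ν (A j ∩ A k)) ≤ ν (A j) + c' * ν (A j) * T := by
          intro j hj
          calc (∑ k ∈ F, ν (A j ∩ A k))
              ≤ ∑ k ∈ F, ((if j = k then ν (A j) else 0) + c' * ν (A j) * ν (A k)) := by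
                refine Finset.sum_le_sum fun k _ => ?_
                by_cases h : j = k
                · subst h; simp [Set.inter_self]
                · simpa [h] using hquasi j k h
            _ = ν (A j) + c' * ν (A j) * T := by
                rw [Finset.sum_add_distrib, Finset.sum_ite_eq F j (fun _ => ν (A j)), if_pos hj]
                congr 1
                rw [hTdef, Finset.mul_sum]
        calc (∑ j ∈ F, ∑ k ∈ F, ν (A j ∩ A k))
            ≤ ∑ j ∈ F, (ν (A j) + c' * ν (A j) * T) := Finset.sum_le_sum step1
          _ = T + c' * T ^ 2 := by
              rw [Finset.sum_add_distrib, ← hTdef]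
              congr 1
              calc ∑ j ∈ F, c' * ν (A j) * T = (c' * T) * ∑ j ∈ F, ν (A j) := by
                    rw [Finset.mul_sum]
                    exact Finset.sum_congr rfl fun j _ => by ring
                _ = c' * T ^ 2 := by rw [← hTdef]; ring
      have hCE := chung_erdos_aux ν A hA F
      have hle : T ^ 2 ≤ (ν U * (1 + c')) * T ^ 2 := by
        calc T ^ 2 ≤ ν U * (∑ j ∈ F, ∑ k ∈ F, ν (A j ∩ A k)) := hCE
          _ ≤ ν U * (T + c' * T ^ 2) := mul_le_mul_right hD _
          _ ≤ ν U * ((1 + c') * T ^ 2) := by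
              refine mul_le_mul_right ?_ _
              rw [add_mul, one_mul]
              gcongr
              calc T = T * 1 := (mul_one T).symm
                _ ≤ T * T := mul_le_mul_right hT1 T
                _ = T ^ 2 := (sq T).symm
          _ = (ν U * (1 + c')) * T ^ 2 := by ring
      have hT2 : (T ^ 2) ≠ 0 := pow_ne_zero _ hT0
      have hT2top : (T ^ 2) ≠ ⊤ := by
        simpa [ENNReal.pow_eq_top_iff] using hTtop
      have h1 : (1 : ℝ≥0∞) ≤ ν U * (1 + c') :=
        (ENNReal.mul_le_mul_iff_left hT2 hT2top).mp (by rw [one_mul]; exact hle)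
      have hinv : (1 + c')⁻¹ ≤ ν U := by
        have h2 : (1 + c')⁻¹ * 1 ≤ (1 + c')⁻¹ * (ν U * (1 + c')) := mul_le_mul_right h1 _
        rwa [mul_one, mul_comm (ν U) (1 + c'), ← mul_assoc,
          ENNReal.inv_mul_cancel (by simp) (by simp [hc'top]), one_mul] at h2
      exact hinv.trans (measure_mono hUB)
    rw [hlimsup]
    have htends := tendsto_measure_iInter_atTop (μ := ν)
      (fun n => (hBm n).nullMeasurableSet) hBanti ⟨0, measure_ne_top ν _⟩
    have hlb : (1 + c')⁻¹ ≤ ν (⋂ n, B n) :=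
      ge_of_tendsto' htends fun n => key n
    have : (0 : ℝ≥0∞) < (1 + c')⁻¹ :=
      ENNReal.inv_pos.mpr (by simp [hc'top])
    exact this.trans_le hlb
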